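/- Let n ≥ 1 and let Z ⊆ (ℂˣ)ⁿ be the set of common zeros, lying in (ℂˣ)ⁿ, of a family of polynomials in n variables all of whose coefficients are algebraic numbers. If p ∈ Z is a point of infinite order in the group (ℂˣ)ⁿ (i.e. p^k ≠ (1,…,1) for every integer k ≥ 1), then p lies in the closure, with respect to the Euclidean topology on (ℂˣ)ⁿ, of the set of points q ∈ Z such that every coordinate of q is an algebraic number and q has infinite order in (ℂˣ)ⁿ. -/

import Mathlib

set_option maxHeartbeats 1000000
set_option synthInstance.maxHeartbeats 400000
set_option linter.unusedTactic false
set_option linter.unreachableTactic false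

noncomputable section
open Polynomial


abbrev Falg : IntermediateField ℚ ℂ := algebraicClosure ℚ ℂ

lemma mem_Falg {x : ℂ} : x ∈ Falg ↔ IsAlgebraic ℚ x := mem_algebraicClosure_iff

/-- evaluation of an `Falg`-mv-polynomial at a complex point -/
abbrev Ev {n : ℕ} (x : Fin n → ℂ) : MvPolynomial (Fin n) ↥Falg →+* ℂ :=
  MvPolynomial.eval₂Hom (algebraMap ↥Falg ℂ) x

lemma Ev_apply {n : ℕ} (x : Fin n → ℂ) (c : MvPolynomial (Fin n) ↥Falg) :
    Ev x c = MvPolynomial.eval x (MvPolynomial.map (algebraMap ↥Falg ℂ) c) := by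
  rw [show (Ev x c) = MvPolynomial.eval₂ (algebraMap ↥Falg ℂ) x c from congrFun (MvPolynomial.coe_eval₂Hom _ _) c, MvPolynomial.eval₂_eq_eval_map]

lemma continuous_Ev {n : ℕ} (c : MvPolynomial (Fin n) ↥Falg) :
    Continuous fun x : Fin n → ℂ => Ev x c := by
  simp only [Ev_apply]
  exact MvPolynomial.continuous_eval _

/-- a root of a nonzero polynomial with algebraic coefficients is algebraic -/
lemma isAlgebraic_of_root {f : ℂ[X]} (hf : f ≠ 0) (hc : ∀ k, IsAlgebraic ℚ (f.coeff k))
    {w : ℂ} (hw : f.eval w = 0) : IsAlgebraic ℚ w := by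
  have hsub : ↑f.coeffs ⊆ (Falg.toSubring : Set ℂ) := by
    intro a ha
    simp only [coeffs, Finset.coe_image, Set.mem_image] at ha
    obtain ⟨k, -, rfl⟩ := ha
    exact mem_Falg.2 (hc k)
  set g : (↥Falg.toSubring)[X] := f.toSubring Falg.toSubring hsub with hg
  have hmap : Polynomial.map (Falg.toSubring.subtype) g = f := Polynomial.map_toSubring _ _ _
  have hgne : g ≠ 0 := by
    intro h
    apply hf
    rw [← hmap, h, Polynomial.map_zero]
  have halg : IsAlgebraic ↥Falg w := by
    refine ⟨g, hgne, ?_⟩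
    rw [Polynomial.aeval_def, Polynomial.eval₂_eq_eval_map]
    have : algebraMap ↥Falg ℂ = Falg.toSubring.subtype := rfl
    rw [this, hmap, hw]
  have hint : IsIntegral ↥Falg w := (isAlgebraic_iff_isIntegral).1 halg
  have : Algebra.IsIntegral ℚ ↥Falg := ⟨fun y => by
    have := (mem_algebraicClosure_iff.1 y.2).isIntegral
    exact (isIntegral_algHom_iff (IntermediateField.val Falg) Subtype.val_injective).1 this⟩
  have : IsIntegral ℚ w := isIntegral_trans (A := ↥Falg) w hint
  exact this.isAlgebraic

/-- evaluating at an algebraic point gives an algebraic number -/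
lemma isAlgebraic_Ev {n : ℕ} {x : Fin n → ℂ} (hx : ∀ i, IsAlgebraic ℚ (x i))
    (c : MvPolynomial (Fin n) ↥Falg) : IsAlgebraic ℚ (Ev x c) := by
  induction c using MvPolynomial.induction_on with
  | C a => simpa using (mem_Falg.1 a.2)
  | add f g hf hg =>
      rw [RingHom.map_add]
      exact ((isAlgebraic_iff_isIntegral.1 hf).add (isAlgebraic_iff_isIntegral.1 hg)).isAlgebraic
  | mul_X f i hf =>
      rw [RingHom.map_mul]
      have : Ev x (MvPolynomial.X i) = x i := by simp
      rw [this]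
      exact ((isAlgebraic_iff_isIntegral.1 hf).mul
        (isAlgebraic_iff_isIntegral.1 (hx i))).isAlgebraic

/-- a polynomial with coefficients in `K` vanishing at an element transcendental over `K`
is zero -/
lemma eq_zero_of_transcendental_root {K : IntermediateField ↥Falg ℂ} {z : ℂ}
    (hz : ¬ IsAlgebraic K z) {G : ℂ[X]} (hcm : ∀ k, G.coeff k ∈ K) (h0 : G.eval z = 0) :
    G = 0 := by
  by_contra hne
  have hsub : ↑G.coeffs ⊆ (K.toSubring : Set ℂ) := by
    intro a ha
    simp only [coeffs, Finset.coe_image, Set.mem_image] at ha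
    obtain ⟨k, -, rfl⟩ := ha
    exact hcm k
  set g : (↥K.toSubring)[X] := G.toSubring K.toSubring hsub with hg
  have hmap : Polynomial.map (K.toSubring.subtype) g = G := Polynomial.map_toSubring _ _ _
  refine hz ⟨g, ?_, ?_⟩
  · intro h
    apply hne
    rw [← hmap, h, Polynomial.map_zero]
  · rw [Polynomial.aeval_def, Polynomial.eval₂_eq_eval_map]
    have : algebraMap ↥K ℂ = K.toSubring.subtype := rfl
    rw [this, hmap, h0]


-- finSuccEquiv commutes with coefficient maps
lemma finSuccEquiv_map_comm {F S : Type*} [CommSemiring F] [CommSemiring S] (n : ℕ)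
    (f : F →+* S) (g : MvPolynomial (Fin (n+1)) F) :
    MvPolynomial.finSuccEquiv S n (MvPolynomial.map f g) =
      Polynomial.map (MvPolynomial.map f) (MvPolynomial.finSuccEquiv F n g) := by
  have : ((MvPolynomial.finSuccEquiv S n).toRingEquiv.toRingHom.comp
      (MvPolynomial.map f)) =
      ((Polynomial.mapRingHom (MvPolynomial.map f)).comp
        (MvPolynomial.finSuccEquiv F n).toRingEquiv.toRingHom) := by
    apply MvPolynomial.ringHom_ext
    · intro a
      simp [MvPolynomial.finSuccEquiv_apply]
    · intro i
      refine Fin.cases ?_ ?_ i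
      · simp [MvPolynomial.finSuccEquiv_X_zero]
      · intro j
        simp [MvPolynomial.finSuccEquiv_X_succ]
  exact DFunLike.congr_fun this g

-- nearby root of a monic polynomial
lemma exists_root_near {f : ℂ[X]} (hm : f.Monic) (hd : 0 < f.natDegree) (z : ℂ) :
    ∃ w : ℂ, f.eval w = 0 ∧
      ‖z - w‖ ^ f.natDegree ≤ ‖f.eval z‖ := by
  have hsplit : f = (Multiset.map (fun a => X - C a) f.roots).prod :=
    (IsAlgClosed.splits f).eq_prod_roots_of_monic hm
  have hcard : Multiset.card f.roots = f.natDegree := by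
    rw [← Polynomial.splits_iff_card_roots]
    exact IsAlgClosed.splits f
  have hroots_ne : f.roots ≠ 0 := by
    intro h
    rw [h] at hcard
    simp at hcard
    omega
  obtain ⟨r, hr⟩ := Multiset.exists_mem_of_ne_zero hroots_ne
  have hfin : (f.roots.toFinset : Finset ℂ).Nonempty := ⟨r, Multiset.mem_toFinset.2 hr⟩
  obtain ⟨w, hw, hwmin⟩ := Finset.exists_min_image f.roots.toFinset
    (fun a => ‖z - a‖) hfin
  refine ⟨w, (Polynomial.mem_roots (hm.ne_zero)).1 (Multiset.mem_toFinset.1 hw), ?_⟩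
  have heval : f.eval z = (Multiset.map (fun a => z - a) f.roots).prod := by
    conv_lhs => rw [hsplit]
    rw [Polynomial.eval_multiset_prod, Multiset.map_map]
    simp
  -- work with nnnorms
  have key : (‖z - w‖₊ : NNReal) ^ f.natDegree ≤ ‖f.eval z‖₊ := by
    rw [heval, ← hcard]
    have : ‖(Multiset.map (fun a => z - a) f.roots).prod‖₊
        = (Multiset.map (fun a => ‖z - a‖₊) f.roots).prod := by
      have := map_multiset_prod ((nnnormHom : ℂ →*₀ NNReal).toMonoidHom)
        (Multiset.map (fun a => z - a) f.roots)
      simp only [MonoidWithZeroHom.toMonoidHom_coe, Multiset.map_map] at this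
      exact this.trans rfl
    rw [this]
    have hc2 : Multiset.card f.roots
        = Multiset.card (Multiset.map (fun a => ‖z - a‖₊) f.roots) := by
      rw [Multiset.card_map]
    rw [hc2]
    apply Multiset.pow_card_le_prod
    intro x hx
    obtain ⟨a, ha, rfl⟩ := Multiset.mem_map.1 hx
    have := hwmin a (Multiset.mem_toFinset.2 ha)
    rw [← NNReal.coe_le_coe, coe_nnnorm, coe_nnnorm]; exact this
  calc ‖z - w‖ ^ f.natDegree
      = ((‖z - w‖₊ : NNReal) ^ f.natDegree : NNReal) := by
        rw [NNReal.coe_pow, coe_nnnorm]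
    _ ≤ (‖f.eval z‖₊ : NNReal) := by exact_mod_cast key
    _ = ‖f.eval z‖ := by rw [coe_nnnorm]

-- algebraic numbers with modulus ≠ 1 are dense
lemma exists_algebraic_near (z : ℂ) {ε : ℝ} (hε : 0 < ε) :
    ∃ w : ℂ, IsAlgebraic ℚ w ∧ ‖z - w‖ < ε ∧ ‖w‖ ≠ 1 := by
  have h4 : (0:ℝ) < ε/4 := by linarith
  obtain ⟨a, ha⟩ := exists_rat_near z.re h4
  obtain ⟨b, hb⟩ := exists_rat_near z.im h4
  obtain ⟨t, ht0, ht4⟩ := exists_rat_btwn h4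
  rw [Rat.cast_pos] at ht0
  have ha' : |z.re - (a:ℝ)| < ε/4 := by
    first | exact ha | (rw [abs_sub_comm]; exact ha)
  have hb' : |z.im - (b:ℝ)| < ε/4 := by
    first | exact hb | (rw [abs_sub_comm]; exact hb)
  have halg : ∀ (u v : ℚ), IsAlgebraic ℚ ((u:ℂ) + (v:ℂ)*Complex.I) := by
    intro u v
    have hu : IsIntegral ℚ (u : ℂ) := isIntegral_algebraMap (x := u)
    have hv : IsIntegral ℚ (v : ℂ) := isIntegral_algebraMap (x := v)
    have hI : IsAlgebraic ℚ (Complex.I) := by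
      refine ⟨X^2 + 1, ?_, ?_⟩
      · intro h
        have := congrArg (fun q => Polynomial.coeff q 0) h
        simp at this
      · simp [Complex.I_sq]
    exact (hu.add (hv.mul (isAlgebraic_iff_isIntegral.1 hI))).isAlgebraic
  -- candidates a + j t for j = 0, 1, 2; some has |w| ≠ 1
  have hcand : ∃ j : ℚ, (j = 0 ∨ j = 1 ∨ j = 2) ∧
      ((a:ℝ) + j*t)^2 + (b:ℝ)^2 ≠ 1 := by
    by_contra hno
    push_neg at hno
    have h0 := hno 0 (Or.inl rfl)
    have h1 := hno 1 (Or.inr (Or.inl rfl))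
    have h2 := hno 2 (Or.inr (Or.inr rfl))
    push_cast at h0 h1 h2
    have htne : (t:ℝ) > 0 := by exact_mod_cast ht0
    nlinarith [h0, h1, h2, htne]
  obtain ⟨j, hj, hjne⟩ := hcand
  set w : ℂ := ((a + j*t : ℚ) : ℂ) + (b:ℂ) * Complex.I with hwdef
  have hre : w.re = (a:ℝ) + j*t := by push_cast [hwdef]; simp
  have him : w.im = (b:ℝ) := by push_cast [hwdef]; simp
  refine ⟨w, halg _ _, ?_, ?_⟩
  · have hj2 : |(j:ℝ)| ≤ 2 := by
      rcases hj with rfl | rfl | rfl <;> norm_num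
    have habs : ‖z - w‖ ≤ |z.re - w.re| + |z.im - w.im| := by
      have hzw : z - w = Complex.mk (z.re - w.re) (z.im - w.im) := by
        apply Complex.ext <;> simp
      rw [hzw]
      exact Complex.norm_le_abs_re_add_abs_im _
    have h1 : |z.re - w.re| < 3*(ε/4) := by
      rw [hre]
      have : |(j:ℝ)*(t:ℝ)| ≤ 2*(t:ℝ) := by
        rw [abs_mul]
        have : |(t:ℝ)| = (t:ℝ) := abs_of_pos (by exact_mod_cast ht0)
        rw [this]
        apply mul_le_mul_of_nonneg_right hj2 (le_of_lt (by exact_mod_cast ht0))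
      have htlt : (t:ℝ) < ε/4 := ht4
      calc |z.re - ((a:ℝ) + j*t)|
          = |(z.re - (a:ℝ)) - (j:ℝ)*(t:ℝ)| := by ring_nf
        _ ≤ |z.re - (a:ℝ)| + |(j:ℝ)*(t:ℝ)| := abs_sub _ _
        _ ≤ ε/4 + 2*(t:ℝ) := by linarith
        _ < 3*(ε/4) := by linarith
    have h2 : |z.im - w.im| < ε/4 := by
      rw [him]
      exact hb'
    calc ‖z - w‖ ≤ |z.re - w.re| + |z.im - w.im| := habs
      _ < 3*(ε/4) + ε/4 := by linarith
      _ = ε := by ring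
  · intro habs1
    apply hjne
    have : (‖w‖)^2 = w.re^2 + w.im^2 := by
      rw [Complex.sq_norm, Complex.normSq_apply]; ring
    rw [habs1, hre, him] at this
    simpa using this.symm
lemma rep0 {n : ℕ} (x : Fin n → ℂ) (u : ℂ)
    (hu : u ∈ IntermediateField.adjoin ↥Falg (Set.range x)) :
    ∃ a b : MvPolynomial (Fin n) ↥Falg, Ev x b ≠ 0 ∧ u * Ev x b = Ev x a := by
  induction hu using IntermediateField.adjoin_induction with
  | mem v hv =>
      obtain ⟨i, rfl⟩ := hv
      exact ⟨MvPolynomial.X i, 1, by simp, by simp⟩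
  | algebraMap c =>
      exact ⟨MvPolynomial.C c, 1, by simp, by simp⟩
  | add v w hv hw ihv ihw =>
      obtain ⟨a₁, b₁, hb₁, h₁⟩ := ihv
      obtain ⟨a₂, b₂, hb₂, h₂⟩ := ihw
      refine ⟨a₁ * b₂ + a₂ * b₁, b₁ * b₂, by rw [map_mul]; exact mul_ne_zero hb₁ hb₂, ?_⟩
      simp only [map_add, map_mul]
      rw [← h₁, ← h₂]
      ring
  | inv v hv ihv =>
      obtain ⟨a, b, hb, h⟩ := ihv
      by_cases hv0 : v = 0
      · exact ⟨0, 1, by simp, by simp [hv0]⟩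
      · have ha : Ev x a ≠ 0 := by
          rw [← h]
          exact mul_ne_zero hv0 hb
        refine ⟨b, a, ha, ?_⟩
        rw [← h]
        field_simp
  | mul v w hv hw ihv ihw =>
      obtain ⟨a₁, b₁, hb₁, h₁⟩ := ihv
      obtain ⟨a₂, b₂, hb₂, h₂⟩ := ihw
      refine ⟨a₁ * a₂, b₁ * b₂, by rw [map_mul]; exact mul_ne_zero hb₁ hb₂, ?_⟩
      simp only [map_mul]
      rw [← h₁, ← h₂]
      ring

lemma rep_poly {n : ℕ} (x : Fin n → ℂ)
    (f : Polynomial ↥(IntermediateField.adjoin ↥Falg (Set.range x))) :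
    ∃ (Fp : Polynomial (MvPolynomial (Fin n) ↥Falg)) (b : MvPolynomial (Fin n) ↥Falg),
      Ev x b ≠ 0 ∧ Fp.map (Ev x) = Polynomial.C (Ev x b) *
        (f.map (algebraMap ↥(IntermediateField.adjoin ↥Falg (Set.range x)) ℂ)) := by
  induction f using Polynomial.induction_on' with
  | monomial k u =>
      obtain ⟨a, b, hb, h⟩ := rep0 x (u : ℂ) u.2
      refine ⟨Polynomial.C a * Polynomial.X ^ k, b, hb, ?_⟩
      rw [Polynomial.map_mul, Polynomial.map_pow, Polynomial.map_C, Polynomial.map_X,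
        Polynomial.map_monomial]
      have : (algebraMap ↥(IntermediateField.adjoin ↥Falg (Set.range x)) ℂ) u = (u : ℂ) := rfl
      rw [this, ← Polynomial.C_mul_X_pow_eq_monomial, ← h]
      rw [map_mul (Polynomial.C : ℂ →+* ℂ[X])]
      ring
  | add f g ihf ihg =>
      obtain ⟨F₁, b₁, hb₁, h₁⟩ := ihf
      obtain ⟨F₂, b₂, hb₂, h₂⟩ := ihg
      refine ⟨Polynomial.C b₂ * F₁ + Polynomial.C b₁ * F₂, b₁ * b₂, by rw [map_mul]; exact mul_ne_zero hb₁ hb₂, ?_⟩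
      rw [Polynomial.map_add, Polynomial.map_mul, Polynomial.map_mul, Polynomial.map_C,
        Polynomial.map_C, h₁, h₂, Polynomial.map_add, map_mul]
      rw [map_mul (Polynomial.C : ℂ →+* ℂ[X])]
      ring

lemma Ev_mem {n : ℕ} (x : Fin n → ℂ) (c : MvPolynomial (Fin n) ↥Falg) :
    Ev x c ∈ IntermediateField.adjoin ↥Falg (Set.range x) := by
  induction c using MvPolynomial.induction_on with
  | C a =>
      have : Ev x (MvPolynomial.C a) = algebraMap ↥Falg ℂ a := by simp
      rw [this]
      exact IntermediateField.algebraMap_mem _ a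
  | add f g hf hg => rw [RingHom.map_add]; exact add_mem hf hg
  | mul_X f i hf =>
      rw [RingHom.map_mul]
      refine mul_mem hf ?_
      have : Ev x (MvPolynomial.X i) = x i := by simp
      rw [this]
      exact IntermediateField.subset_adjoin _ _ ⟨i, rfl⟩

lemma Ev_cons {n : ℕ} (x : Fin n → ℂ) (y : ℂ) (g : MvPolynomial (Fin (n+1)) ↥Falg) :
    Ev (Fin.cons y x) g =
      Polynomial.eval y (Polynomial.map (Ev x) (MvPolynomial.finSuccEquiv ↥Falg n g)) := by
  have hcomp : (MvPolynomial.eval x).comp (MvPolynomial.map (algebraMap ↥Falg ℂ))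
      = (Ev x : MvPolynomial (Fin n) ↥Falg →+* ℂ) :=
    RingHom.ext fun c => (Ev_apply x c).symm
  rw [Ev_apply, MvPolynomial.eval_eq_eval_mv_eval', finSuccEquiv_map_comm, Polynomial.map_map,
    hcomp]

lemma tower_alg {n : ℕ} {x : Fin n → ℂ} (hx : ∀ i, IsAlgebraic ℚ (x i)) {z : ℂ}
    (hz : IsAlgebraic ↥(IntermediateField.adjoin ↥Falg (Set.range x)) z) :
    IsAlgebraic ℚ z := by
  set L := IntermediateField.adjoin ↥Falg (Set.range x) with hL
  have hbot : L ≤ ⊥ := by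
    rw [hL, IntermediateField.adjoin_le_iff]
    rintro - ⟨i, rfl⟩
    rw [SetLike.mem_coe, IntermediateField.mem_bot]
    exact ⟨⟨x i, mem_Falg.2 (hx i)⟩, rfl⟩
  have hallalg : ∀ u : ℂ, u ∈ L → IsAlgebraic ℚ u := by
    intro u hu
    obtain ⟨c, hc⟩ := IntermediateField.mem_bot.1 (hbot hu)
    rw [← hc]
    exact mem_Falg.1 c.2
  obtain ⟨f, hf0, hfz⟩ := hz
  refine isAlgebraic_of_root (f := f.map (algebraMap ↥L ℂ)) ?_ ?_ ?_
  · intro h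
    exact hf0 (Polynomial.map_injective _ (algebraMap ↥L ℂ).injective (by simpa using h))
  · intro k
    rw [Polynomial.coeff_map]
    exact hallalg _ (f.coeff k).2
  · rw [Polynomial.eval_map, ← Polynomial.aeval_def, hfz]

theorem key : ∀ (n : ℕ) (p : Fin n → ℂ) (T : Finset (MvPolynomial (Fin n) ↥Falg)),
    (∀ g ∈ T, Ev p g = 0) → ∀ ε : ℝ, 0 < ε →
    ∃ q : Fin n → ℂ, (∀ i, IsAlgebraic ℚ (q i)) ∧ (∀ i, ‖p i - q i‖ < ε) ∧
      (∀ g ∈ T, Ev q g = 0) ∧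
      ((∃ i, ¬ IsAlgebraic ℚ (p i)) → ∃ i, ‖q i‖ ≠ 1) := by
  intro n
  induction n with
  | zero =>
      intro p T hT ε hε
      exact ⟨p, fun i => i.elim0, fun i => i.elim0, hT, fun ⟨i, _⟩ => i.elim0⟩
  | succ n ih =>
      intro p T hT ε hε
      set z : ℂ := p 0 with hz
      set pt : Fin n → ℂ := Fin.tail p with hpt
      have hcons : Fin.cons z pt = p := Fin.cons_self_tail p
      set L := IntermediateField.adjoin ↥Falg (Set.range pt) with hLdef
      -- the image polynomials
      have hGz : ∀ g ∈ T,
          Polynomial.eval z (Polynomial.map (Ev pt) (MvPolynomial.finSuccEquiv ↥Falg n g)) = 0 := by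
        intro g hg
        rw [← Ev_cons, hcons]
        exact hT g hg
      have hGmem : ∀ (g : MvPolynomial (Fin (n+1)) ↥Falg) (k : ℕ),
          (Polynomial.map (Ev pt) (MvPolynomial.finSuccEquiv ↥Falg n g)).coeff k ∈ L := by
        intro g k
        rw [Polynomial.coeff_map]
        exact Ev_mem pt _
      by_cases halg : IsAlgebraic ↥L z
      · -- algebraic case
        have hint : IsIntegral ↥L z := isAlgebraic_iff_isIntegral.1 halg
        set m : Polynomial ↥L := minpoly ↥L z with hmdef
        have hmon : m.Monic := minpoly.monic hint
        set D : ℕ := m.natDegree with hDdef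
        have hD : 0 < D := minpoly.natDegree_pos hint
        set m' : Polynomial ℂ := m.map (algebraMap ↥L ℂ) with hm'def
        have hm'mon : m'.Monic := hmon.map _
        have hm'deg : m'.natDegree = D := hmon.natDegree_map _
        have hm'z : m'.eval z = 0 := by
          rw [hm'def, Polynomial.eval_map, ← Polynomial.aeval_def, minpoly.aeval]
        obtain ⟨M₀, b, hbne, hM₀⟩ := rep_poly pt m
        set B := M₀.coeff D with hBdef
        have hBpt : Ev pt B = Ev pt b := by
          have h1 := congrArg (fun q => Polynomial.coeff q D) hM₀
          simp only [Polynomial.coeff_map, Polynomial.coeff_C_mul] at h1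
          have h2 : (algebraMap ↥(IntermediateField.adjoin ↥Falg (Set.range pt)) ℂ)
              (m.coeff D) = 1 := by
            have h3 : m'.coeff D = 1 := by
              rw [← hm'deg]
              exact hm'mon.coeff_natDegree
            rw [← h3, hm'def, Polynomial.coeff_map]
          rw [hBdef, h1, h2, mul_one]
        have hBne : Ev pt B ≠ 0 := by rw [hBpt]; exact hbne
        have hjunk : ∀ k, D < k → Ev pt (M₀.coeff k) = 0 := by
          intro k hk
          have h1 := congrArg (fun q => Polynomial.coeff q k) hM₀
          simp only [Polynomial.coeff_map, Polynomial.coeff_C_mul] at h1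
          rw [h1, Polynomial.coeff_eq_zero_of_natDegree_lt (show m.natDegree < k by omega),
            map_zero, mul_zero]
        -- data for each member of T
        have hdata : ∀ g : {x // x ∈ T}, ∃ (Δ : Polynomial (MvPolynomial (Fin n) ↥Falg))
            (v : MvPolynomial (Fin n) ↥Falg), Ev pt v ≠ 0 ∧ (Δ.map (Ev pt) = 0) ∧
            (∀ (x : Fin n → ℂ) (w : ℂ), Δ.map (Ev x) = 0 →
              (M₀.map (Ev x)).eval w = 0 → Ev x v ≠ 0 → Ev x b ≠ 0 →
              Ev (Fin.cons w x) g.1 = 0) := by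
          rintro ⟨g, hg⟩
          set G := MvPolynomial.finSuccEquiv ↥Falg n g with hGdef
          set Gbar := Polynomial.map (Ev pt) G with hGbardef
          have hsub : ↑Gbar.coeffs ⊆ (L.toSubring : Set ℂ) := by
            intro a ha
            simp only [Polynomial.coeffs, Finset.coe_image, Set.mem_image] at ha
            obtain ⟨k, -, rfl⟩ := ha
            exact hGmem g k
          set gL := Gbar.toSubring L.toSubring hsub with hgLdef
          have hmapgL : gL.map L.toSubring.subtype = Gbar := Polynomial.map_toSubring _ _ _
          have haev : Polynomial.aeval z gL = 0 := by
            rw [Polynomial.aeval_def, Polynomial.eval₂_eq_eval_map]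
            rw [show (algebraMap ↥L.toSubring ℂ) = L.toSubring.subtype from rfl, hmapgL]
            exact hGz g hg
          obtain ⟨h, hh⟩ := minpoly.dvd ↥L z haev
          obtain ⟨H₀, v, hvne, hH₀⟩ := rep_poly pt h
          have hGbar_eq : Gbar = m' * (h.map (algebraMap ↥L ℂ)) := by
            have hco : algebraMap ↥L ℂ = L.toSubring.subtype := rfl
            rw [← hmapgL, ← hmdef] at *
            rw [hh, Polynomial.map_mul, hm'def, hco]
            exact congrArg (· * _) (congrArg _ hmdef.symm)
          refine ⟨Polynomial.C (b * v) * G - M₀ * H₀, v, hvne, ?_, ?_⟩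
          · rw [Polynomial.map_sub, Polynomial.map_mul, Polynomial.map_mul, Polynomial.map_C,
              ← hGbardef, hM₀, hH₀, hGbar_eq, RingHom.map_mul, Polynomial.C_mul]
            ring
          · intro x w hΔ hM hv hb
            have hev := congrArg (fun q => Polynomial.eval w q) hΔ
            simp only [Polynomial.map_sub, Polynomial.map_mul, Polynomial.map_C,
              Polynomial.eval_sub, Polynomial.eval_mul, Polynomial.eval_C,
              Polynomial.map_zero, Polynomial.eval_zero] at hev
            rw [hM, zero_mul, sub_zero, RingHom.map_mul] at hev
            have := mul_eq_zero.1 hev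
            rcases this with h0 | h0
            · exact absurd h0 (mul_ne_zero hb hv)
            · rw [Ev_cons, ← hGdef, h0]
        choose Δf vf hvf hΔf himp using hdata
        -- the finite set of conditions for the induction
        set T' : Finset (MvPolynomial (Fin n) ↥Falg) :=
          (T.attach.biUnion fun g => (Finset.range ((Δf g).natDegree + 1)).image
            fun k => (Δf g).coeff k) ∪
          ((Finset.Ioc D M₀.natDegree).image fun k => M₀.coeff k) with hT'def
        have hT' : ∀ c ∈ T', Ev pt c = 0 := by
          intro c hc
          rw [hT'def, Finset.mem_union] at hc
          rcases hc with hc | hc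
          · rw [Finset.mem_biUnion] at hc
            obtain ⟨g, -, hc⟩ := hc
            rw [Finset.mem_image] at hc
            obtain ⟨k, -, rfl⟩ := hc
            have := congrArg (fun q => Polynomial.coeff q k) (hΔf g)
            simpa [Polynomial.coeff_map] using this
          · rw [Finset.mem_image] at hc
            obtain ⟨k, hk, rfl⟩ := hc
            rw [Finset.mem_Ioc] at hk
            exact hjunk k hk.1
        -- continuity setup
        have hΦeq : ∀ x : Fin n → ℂ, (M₀.map (Ev x)).eval z
            = ∑ k ∈ M₀.support, Ev x (M₀.coeff k) * z ^ k := by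
          intro x
          rw [Polynomial.eval_map, Polynomial.eval₂_eq_sum, Polynomial.sum_def]
        have hΦcont : Continuous (fun x : Fin n → ℂ => (M₀.map (Ev x)).eval z) := by
          simp only [hΦeq]
          exact continuous_finset_sum _ fun k _ => (continuous_Ev _).mul continuous_const
        have hΦpt : (M₀.map (Ev pt)).eval z = 0 := by
          rw [hM₀, Polynomial.eval_mul, Polynomial.eval_C, hm'z, mul_zero]
        set c0 : ℝ := ‖Ev pt B‖ with hc0def
        have hc0pos : 0 < c0 := norm_pos_iff.2 hBne
        have hεD : 0 < ε ^ D * (c0 / 2) := by positivity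
        -- eventually conditions near pt
        have hev : ∀ᶠ x in nhds pt, (Ev x B ≠ 0 ∧ Ev x b ≠ 0 ∧
            ‖(M₀.map (Ev x)).eval z‖ < ε ^ D * (c0 / 2) ∧
            c0 / 2 < ‖Ev x B‖) ∧ ∀ g ∈ T.attach, Ev x (vf g) ≠ 0 := by
          refine Filter.Eventually.and (Filter.Eventually.and ?_ (Filter.Eventually.and ?_
            (Filter.Eventually.and ?_ ?_))) ?_
          · exact (continuous_Ev B).continuousAt.eventually_ne hBne
          · exact (continuous_Ev b).continuousAt.eventually_ne hbne
          · have ht : Filter.Tendsto (fun x : Fin n → ℂ =>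
                ‖(M₀.map (Ev x)).eval z‖) (nhds pt)
                (nhds (‖(M₀.map (Ev pt)).eval z‖)) :=
              (continuous_norm.comp hΦcont).continuousAt
            rw [hΦpt] at ht
            simp only [norm_zero] at ht
            exact ht.eventually_lt_const hεD
          · have ht : Filter.Tendsto (fun x : Fin n → ℂ => ‖Ev x B‖) (nhds pt)
                (nhds c0) := by
              rw [hc0def]
              exact (continuous_norm.comp (continuous_Ev B)).continuousAt
            exact ht.eventually_const_lt (by linarith)
          · rw [Filter.eventually_all_finset]
            intro g hg
            exact (continuous_Ev (vf g)).continuousAt.eventually_ne (hvf g)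
        obtain ⟨δ, hδpos, hδ⟩ := Metric.eventually_nhds_iff.1 hev
        set ε' : ℝ := min ε δ with hε'def
        have hε'pos : 0 < ε' := lt_min hε hδpos
        obtain ⟨q', hq'alg, hq'close, hq'van, hq'mod⟩ := ih pt T' hT' ε' hε'pos
        have hq'dist : dist q' pt < δ := by
          rw [dist_pi_lt_iff hδpos]
          intro i
          rw [Complex.dist_eq]
          calc ‖q' i - pt i‖ = ‖pt i - q' i‖ := by
                rw [← Complex.dist_eq, dist_comm, Complex.dist_eq]
            _ < ε' := hq'close i
            _ ≤ δ := min_le_right _ _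
        obtain ⟨⟨hBq, hbq, hΦq, hBq2⟩, hvq⟩ := hδ hq'dist
        set lead : ℂ := Ev q' B with hleaddef
        set N : Polynomial ℂ := M₀.map (Ev q') with hNdef
        have hNcoeffD : N.coeff D = lead := by rw [hNdef, Polynomial.coeff_map, hleaddef, hBdef]
        have hjunkN : ∀ k, D < k → N.coeff k = 0 := by
          intro k hk
          rw [hNdef, Polynomial.coeff_map]
          by_cases hk2 : k ≤ M₀.natDegree
          · apply hq'van
            rw [hT'def, Finset.mem_union]
            right
            exact Finset.mem_image.2 ⟨k, Finset.mem_Ioc.2 ⟨hk, hk2⟩, rfl⟩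
          · rw [Polynomial.coeff_eq_zero_of_natDegree_lt (by omega), RingHom.map_zero]
        have hNdeg : N.natDegree = D := by
          refine le_antisymm (Polynomial.natDegree_le_iff_coeff_eq_zero.2
            fun k hk => hjunkN k hk) (Polynomial.le_natDegree_of_ne_zero ?_)
          rw [hNcoeffD]
          exact hBq
        have hNlc : N.leadingCoeff = lead := by rw [Polynomial.leadingCoeff, hNdeg, hNcoeffD]
        have hNne : N ≠ 0 := by
          intro h
          rw [h, Polynomial.coeff_zero] at hNcoeffD
          exact hBq hNcoeffD.symm
        set N' : Polynomial ℂ := Polynomial.C lead⁻¹ * N with hN'def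
        have hN'mon : N'.Monic := by
          rw [Polynomial.Monic, hN'def, Polynomial.leadingCoeff_mul, Polynomial.leadingCoeff_C,
            hNlc, inv_mul_cancel₀ hBq]
        have hN'deg : N'.natDegree = D := by
          rw [hN'def, Polynomial.natDegree_C_mul (inv_ne_zero hBq), hNdeg]
        have hN'z : ‖N'.eval z‖ < ε ^ D := by
          rw [hN'def, Polynomial.eval_mul, Polynomial.eval_C, norm_mul, norm_inv]
          have h1 : ‖N.eval z‖ < ε ^ D * (c0 / 2) := by
            rw [hNdef]; exact hΦq
          have h2 : c0 / 2 < ‖lead‖ := hBq2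
          have h3 : 0 < ‖lead‖ := lt_trans (by linarith) h2
          rw [inv_mul_lt_iff₀ h3]
          calc ‖N.eval z‖ < ε ^ D * (c0 / 2) := h1
            _ ≤ ε ^ D * ‖lead‖ := by
                apply mul_le_mul_of_nonneg_left (le_of_lt h2) (by positivity)
            _ = ‖lead‖ * ε ^ D := by ring
        obtain ⟨w, hwroot, hwbound⟩ := exists_root_near hN'mon (by rw [hN'deg]; exact hD) z
        have hwclose : ‖z - w‖ < ε := by
          have : ‖z - w‖ ^ D < ε ^ D := by
            rw [← hN'deg]
            exact lt_of_le_of_lt hwbound (by rw [hN'deg]; exact hN'z)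
          exact lt_of_pow_lt_pow_left₀ D hε.le this
        have hNw : N.eval w = 0 := by
          have h1 : N'.eval w = 0 := hwroot
          rw [hN'def, Polynomial.eval_mul, Polynomial.eval_C] at h1
          rcases mul_eq_zero.1 h1 with h0 | h0
          · exact absurd h0 (inv_ne_zero hBq)
          · exact h0
        have hwalg : IsAlgebraic ℚ w := by
          refine isAlgebraic_of_root hNne ?_ hNw
          intro k
          rw [hNdef, Polynomial.coeff_map]
          exact isAlgebraic_Ev hq'alg _
        refine ⟨Fin.cons w q', ?_, ?_, ?_, ?_⟩
        · intro i
          refine Fin.cases ?_ ?_ i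
          · simpa using hwalg
          · intro j
            simpa using hq'alg j
        · intro i
          refine Fin.cases ?_ ?_ i
          · simpa using hwclose
          · intro j
            have := hq'close j
            have h2 : ε' ≤ ε := min_le_left _ _
            simp only [Fin.cons_succ]
            calc ‖p j.succ - q' j‖ = ‖pt j - q' j‖ := by rw [hpt]; rfl
              _ < ε' := this
              _ ≤ ε := h2
        · intro g hg
          have hΔmap : (Δf ⟨g, hg⟩).map (Ev q') = 0 := by
            apply Polynomial.ext
            intro k
            rw [Polynomial.coeff_map, Polynomial.coeff_zero]
            by_cases hk : k ≤ (Δf ⟨g, hg⟩).natDegree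
            · apply hq'van
              rw [hT'def, Finset.mem_union]
              left
              rw [Finset.mem_biUnion]
              exact ⟨⟨g, hg⟩, Finset.mem_attach _ _,
                Finset.mem_image.2 ⟨k, Finset.mem_range.2 (by omega), rfl⟩⟩
            · rw [Polynomial.coeff_eq_zero_of_natDegree_lt (by omega), RingHom.map_zero]
          exact himp ⟨g, hg⟩ q' w hΔmap (by rw [← hNdef]; exact hNw)
            (hvq ⟨g, hg⟩ (Finset.mem_attach _ _)) hbq
        · rintro ⟨i, hi⟩
          have hptj : ∃ j, ¬ IsAlgebraic ℚ (pt j) := by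
            by_contra hno
            push_neg at hno
            have hzalg : IsAlgebraic ℚ z := tower_alg hno halg
            apply hi
            refine Fin.cases ?_ ?_ i
            · exact hzalg
            · intro j
              exact hno j
          obtain ⟨i0, hmod⟩ := hq'mod hptj
          exact ⟨i0.succ, by simpa using hmod⟩
      · -- transcendental case
        have hGzero : ∀ g ∈ T,
            Polynomial.map (Ev pt) (MvPolynomial.finSuccEquiv ↥Falg n g) = 0 := by
          intro g hg
          exact eq_zero_of_transcendental_root halg (fun k => hGmem g k) (hGz g hg)
        set T' : Finset (MvPolynomial (Fin n) ↥Falg) :=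
          T.biUnion (fun g => (Finset.range ((MvPolynomial.finSuccEquiv ↥Falg n g).natDegree + 1)).image
            (fun k => (MvPolynomial.finSuccEquiv ↥Falg n g).coeff k)) with hT'def
        have hT' : ∀ c ∈ T', Ev pt c = 0 := by
          intro c hc
          rw [hT'def, Finset.mem_biUnion] at hc
          obtain ⟨g, hg, hc⟩ := hc
          rw [Finset.mem_image] at hc
          obtain ⟨k, -, rfl⟩ := hc
          have := congrArg (fun q => Polynomial.coeff q k) (hGzero g hg)
          simpa [Polynomial.coeff_map] using this
        obtain ⟨q', hq'alg, hq'close, hq'van, -⟩ := ih pt T' hT' ε hε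
        obtain ⟨w, hwalg, hwclose, hwmod⟩ := exists_algebraic_near z hε
        refine ⟨Fin.cons w q', ?_, ?_, ?_, ?_⟩
        · intro i
          refine Fin.cases ?_ ?_ i
          · simpa using hwalg
          · intro j
            simpa using hq'alg j
        · intro i
          refine Fin.cases ?_ ?_ i
          · simpa using hwclose
          · intro j
            simpa [hpt, Fin.tail] using hq'close j
        · intro g hg
          rw [Ev_cons]
          have hzero : Polynomial.map (Ev q') (MvPolynomial.finSuccEquiv ↥Falg n g) = 0 := by
            apply Polynomial.ext
            intro k
            rw [Polynomial.coeff_map, Polynomial.coeff_zero]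
            by_cases hk : k ≤ (MvPolynomial.finSuccEquiv ↥Falg n g).natDegree
            · apply hq'van
              rw [hT'def, Finset.mem_biUnion]
              exact ⟨g, hg, Finset.mem_image.2 ⟨k, Finset.mem_range.2 (by omega), rfl⟩⟩
            · rw [Polynomial.coeff_eq_zero_of_natDegree_lt (by omega), RingHom.map_zero]
          rw [hzero, Polynomial.eval_zero]
        · intro _
          refine ⟨0, ?_⟩
          simpa using hwmod

lemma abs_eq_one_of_pow {a : ℝ} (h0 : 0 ≤ a) {m : ℕ} (hm : m ≠ 0) (h : a ^ m = 1) : a = 1 := by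
  rcases lt_trichotomy a 1 with hlt | heq | hgt
  · have := pow_lt_one₀ h0 hlt hm
    rw [h] at this
    exact absurd this (lt_irrefl _)
  · exact heq
  · have := one_lt_pow₀ hgt hm
    rw [h] at this
    exact absurd this (lt_irrefl _)

/-- existence of a preimage over the algebraic numbers -/
lemma exists_preimage {n : ℕ} (P : MvPolynomial (Fin n) ℂ)
    (hP : ∀ m, IsAlgebraic ℚ (MvPolynomial.coeff m P)) :
    ∃ P' : MvPolynomial (Fin n) ↥Falg, MvPolynomial.map (algebraMap ↥Falg ℂ) P' = P := by
  refine ⟨∑ mdeg ∈ P.support, MvPolynomial.monomial mdeg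
    (⟨MvPolynomial.coeff mdeg P, mem_Falg.2 (hP mdeg)⟩ : ↥Falg), ?_⟩
  rw [map_sum]
  have : ∀ mdeg ∈ P.support, MvPolynomial.map (algebraMap ↥Falg ℂ)
      (MvPolynomial.monomial mdeg (⟨MvPolynomial.coeff mdeg P, mem_Falg.2 (hP mdeg)⟩ : ↥Falg))
      = MvPolynomial.monomial mdeg (MvPolynomial.coeff mdeg P) := by
    intro mdeg _
    rw [MvPolynomial.map_monomial]
    rfl
  rw [Finset.sum_congr rfl this]
  exact MvPolynomial.support_sum_monomial_coeff P

/-- If `Z ⊆ (ℂˣ)ⁿ` is the set of common zeros (lying in `(ℂˣ)ⁿ`) of a family of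
polynomials with algebraic coefficients, then any point of `Z` of infinite order in the
group `(ℂˣ)ⁿ` is in the closure of the set of points of `Z` with algebraic coordinates
and infinite order. -/
theorem mem_closure_algebraic_infinite_order_points
    (n : ℕ) (hn : 1 ≤ n) (S : Set (MvPolynomial (Fin n) ℂ))
    (hS : ∀ P ∈ S, ∀ m, IsAlgebraic ℚ (MvPolynomial.coeff m P))
    (Z : Set (Fin n → ℂˣ))
    (hZ : Z = {x : Fin n → ℂˣ | ∀ P ∈ S, MvPolynomial.eval (fun i => (x i : ℂ)) P = 0})
    (p : Fin n → ℂˣ) (hp : p ∈ Z) (hord : ¬ IsOfFinOrder p) :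
    p ∈ closure {q : Fin n → ℂˣ |
      q ∈ Z ∧ (∀ i, IsAlgebraic ℚ ((q i : ℂ))) ∧ ¬ IsOfFinOrder q} := by
  classical
  set pc : Fin n → ℂ := fun i => (p i : ℂ) with hpc
  by_cases hall : ∀ i, IsAlgebraic ℚ (pc i)
  · exact subset_closure ⟨hp, hall, hord⟩
  push_neg at hall
  -- the kernel ideal and its finite generating set
  set I : Ideal (MvPolynomial (Fin n) ↥Falg) := RingHom.ker (Ev pc) with hIdef
  obtain ⟨G, hG⟩ := IsNoetherian.noetherian I
  have hGvan : ∀ g ∈ G, Ev pc g = 0 := by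
    intro g hg
    have : g ∈ I := by
      rw [← hG]
      exact Ideal.subset_span hg
    exact RingHom.mem_ker.1 this
  -- minimum modulus of the coordinates
  have hne : (Finset.univ : Finset (Fin n)).Nonempty := ⟨⟨0, hn⟩, Finset.mem_univ _⟩
  obtain ⟨i0, -, hmin⟩ := Finset.exists_min_image Finset.univ
    (fun i => ‖pc i‖) hne
  set m0 : ℝ := ‖pc i0‖ with hm0
  have hm0pos : 0 < m0 := by
    rw [hm0]
    exact norm_pos_iff.2 (Units.ne_zero (p i0))
  -- the approximating points
  have hqk : ∀ k : ℕ, ∃ q : Fin n → ℂ, (∀ i, IsAlgebraic ℚ (q i)) ∧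
      (∀ i, ‖pc i - q i‖ < min (1/((k:ℝ)+1)) m0) ∧
      (∀ g ∈ G, Ev q g = 0) ∧ (∃ i, ‖q i‖ ≠ 1) := by
    intro k
    have hpos : (0:ℝ) < min (1/((k:ℝ)+1)) m0 := by
      apply lt_min _ hm0pos
      positivity
    obtain ⟨q, h1, h2, h3, h4⟩ := key n pc G hGvan _ hpos
    exact ⟨q, h1, h2, h3, h4 hall⟩
  choose qf hqalg hqclose hqvan hqmod using hqk
  -- each qf k is nonvanishing in every coordinate
  have hqne : ∀ k i, qf k i ≠ 0 := by
    intro k i h0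
    have h1 := hqclose k i
    rw [h0, sub_zero] at h1
    have h2 : m0 ≤ ‖pc i‖ := hmin i (Finset.mem_univ i)
    have h3 : min (1/(k+1 : ℝ)) m0 ≤ m0 := min_le_right _ _
    linarith
  set Q : ℕ → (Fin n → ℂˣ) := fun k i => Units.mk0 (qf k i) (hqne k i) with hQ
  -- membership in the target set
  have hmem : ∀ k, Q k ∈ {q : Fin n → ℂˣ |
      q ∈ Z ∧ (∀ i, IsAlgebraic ℚ ((q i : ℂ))) ∧ ¬ IsOfFinOrder q} := by
    intro k
    refine ⟨?_, ?_, ?_⟩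
    · rw [hZ]
      intro P hPS
      obtain ⟨P', hP'⟩ := exists_preimage P (hS P hPS)
      have hP'I : P' ∈ I := by
        rw [hIdef, RingHom.mem_ker, Ev_apply, hP']
        have := hp
        rw [hZ] at this
        exact this P hPS
      have hker : I ≤ RingHom.ker (Ev (qf k)) := by
        rw [← hG, Submodule.span_le]
        intro g hg
        rw [SetLike.mem_coe, RingHom.mem_ker]
        exact hqvan k g hg
      have : Ev (qf k) P' = 0 := RingHom.mem_ker.1 (hker hP'I)
      rw [Ev_apply, hP'] at this
      convert this using 2
      rfl
    · intro i
      exact hqalg k i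
    · intro hfin
      obtain ⟨mm, hmm, hpow⟩ := isOfFinOrder_iff_pow_eq_one.1 hfin
      obtain ⟨i, hi⟩ := hqmod k
      apply hi
      have h1 : (Q k ^ mm) i = 1 := by rw [hpow]; rfl
      have h2 : ((Q k i : ℂˣ) : ℂ) ^ mm = 1 := by
        rw [← Units.val_pow_eq_pow_val]
        have : (Q k ^ mm) i = Q k i ^ mm := Pi.pow_apply _ _ _
        rw [← this, h1, Units.val_one]
      have h3 : ((Q k i : ℂˣ) : ℂ) = qf k i := rfl
      rw [h3] at h2
      have h4 : ‖qf k i‖ ^ mm = 1 := by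
        rw [← norm_pow, h2, norm_one]
      exact abs_eq_one_of_pow (norm_nonneg _) (by omega : mm ≠ 0) h4
  -- convergence
  have htend : Filter.Tendsto Q Filter.atTop (nhds p) := by
    rw [tendsto_pi_nhds]
    intro i
    rw [Units.isEmbedding_val₀.tendsto_nhds_iff]
    have hdist : ∀ k : ℕ, dist ((Q k i : ℂ)) (pc i) ≤ 1/(k+1) := by
      intro k
      have h1 := hqclose k i
      have h2 : dist ((Q k i : ℂ)) (pc i) = ‖pc i - qf k i‖ := by
        rw [Complex.dist_eq, ← Complex.dist_eq, dist_comm]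
        exact Complex.dist_eq _ _
      rw [h2]
      exact le_of_lt (lt_of_lt_of_le h1 (min_le_left _ _))
    rw [tendsto_iff_dist_tendsto_zero]
    apply squeeze_zero (fun k => dist_nonneg) hdist
    exact tendsto_one_div_add_atTop_nhds_zero_nat
  exact mem_closure_of_tendsto htend (Filter.Eventually.of_forall hmem)
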